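/- For any graph G and any two vertices u, v with N[u] ⊆ N[v], if both u and v appear in a dominating sequence S of G (where each vertex must footprint some newly dominated vertex), then u appears before v in S. -/

import Mathlib

open Finset

variable {V : Type*}

/-- The closed neighborhood of a vertex. -/
def CN (G : SimpleGraph V) (v : V) : Set V := insert v (G.neighborSet v)

/-- A closed neighborhood (legal) sequence: distinct vertices, each footprinting
a vertex not dominated by the closed neighborhoods of earlier vertices. -/
def IsCNSeq (G : SimpleGraph V) (S : List V) : Prop :=
  S.Nodup ∧ ∀ i : Fin S.length, ∃ u, u ∈ CN G (S.get i) ∧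
    ∀ j : Fin S.length, j < i → u ∉ CN G (S.get j)

/-- A dominating sequence: a closed neighborhood sequence whose vertex set dominates. -/
def IsDomSeq (G : SimpleGraph V) (S : List V) : Prop :=
  IsCNSeq G S ∧ ∀ v : V, ∃ u ∈ S, v ∈ CN G u

/-- The Grundy domination number: the maximum length of a dominating sequence. -/
noncomputable def grundyDom (G : SimpleGraph V) : ℕ :=
  sSup {n | ∃ S : List V, IsDomSeq G S ∧ S.length = n}

/-- If `N[u] ⊆ N[v]` and both `u` and `v` appear in a dominating sequence `S`,
then `u` appears before `v` in `S`. -/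
theorem closed_nbhd_subset_appears_before {V : Type*} [DecidableEq V]
    (G : SimpleGraph V) (S : List V) (hS : IsDomSeq G S)
    (u v : V) (hne : u ≠ v) (hsub : CN G u ⊆ CN G v)
    (hu : u ∈ S) (hv : v ∈ S) :
    S.idxOf u < S.idxOf v := by
  have hi : S.idxOf u < S.length := List.idxOf_lt_length_iff.2 hu
  have hj : S.idxOf v < S.length := List.idxOf_lt_length_iff.2 hv
  by_contra h
  push_neg at h
  have hne' : S.idxOf v ≠ S.idxOf u := by
    intro heq
    exact hne (by rw [← List.idxOf_get hi, ← List.idxOf_get hj]; exact congrArg S.get (Fin.ext heq.symm))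
  have hlt : S.idxOf v < S.idxOf u := lt_of_le_of_ne h hne'
  obtain ⟨w, hw1, hw2⟩ := hS.1.2 ⟨S.idxOf u, hi⟩
  have hgu : S.get ⟨S.idxOf u, hi⟩ = u := List.idxOf_get hi
  have hgv : S.get ⟨S.idxOf v, hj⟩ = v := List.idxOf_get hj
  rw [hgu] at hw1
  exact hw2 ⟨S.idxOf v, hj⟩ hlt (by rw [hgv]; exact hsub hw1)
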